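/- Let f : ℝ → ℝ be C² with compact support, φ : ℝ → ℝ be C², m ≥ 0 a constant, and 0 ≤ ξ ≤ 1/4. Define T(λ) = (1−2ξ)(φ')² + (1/2)(1−4ξ) m² φ² − 2ξ φ φ''. Then ∫ T f² dλ ≥ −2ξ ∫ φ² (f')² dλ. -/

import Mathlib

open MeasureTheory Set Function

private lemma integral_deriv_zero (g : ℝ → ℝ) (hg : ContDiff ℝ 1 g)
    (hgc : HasCompactSupport g) : (∫ x : ℝ, deriv g x) = 0 := by
  have hi : Integrable (deriv g) :=
    (hg.continuous_deriv le_rfl).integrable_of_hasCompactSupport hgc.deriv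
  rw [← intervalIntegral.integral_Iic_add_Ioi (b := 0) hi.integrableOn hi.integrableOn,
    HasCompactSupport.integral_Iic_deriv_eq hg hgc 0,
    HasCompactSupport.integral_Ioi_deriv_eq hg hgc 0]
  ring

theorem stmt_3 (f φ : ℝ → ℝ) (hf : ContDiff ℝ 2 f) (hfc : HasCompactSupport f)
    (hφ : ContDiff ℝ 2 φ) (m ξ : ℝ) (hm : 0 ≤ m) (hξ0 : 0 ≤ ξ) (hξ1 : ξ ≤ 1/4)
    (T : ℝ → ℝ)
    (hT : ∀ l, T l = (1 - 2*ξ) * (deriv φ l)^2 + (1/2) * (1 - 4*ξ) * m^2 * (φ l)^2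
        - 2 * ξ * φ l * deriv (deriv φ) l) :
    (∫ l : ℝ, T l * (f l)^2) ≥ -2 * ξ * ∫ l : ℝ, (φ l)^2 * (deriv f l)^2 := by
  have hf1 : ContDiff ℝ 1 f := hf.of_le one_le_two
  have hφ1 : ContDiff ℝ 1 φ := hφ.of_le one_le_two
  have hφ2 : ContDiff ℝ ((1 : ℕ) + 1) φ := by exact_mod_cast hφ
  have hφ'1 : ContDiff ℝ 1 (deriv φ) := (contDiff_succ_iff_deriv.mp hφ2).2.2
  have hcf : Continuous f := hf.continuous
  have hcf' : Continuous (deriv f) := hf.continuous_deriv one_le_two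
  have hcφ : Continuous φ := hφ.continuous
  have hcφ' : Continuous (deriv φ) := hφ'1.continuous
  have hcφ'' : Continuous (deriv (deriv φ)) := hφ'1.continuous_deriv le_rfl
  have hdf : ∀ x, HasDerivAt f (deriv f x) x :=
    fun x => (hf1.differentiable one_ne_zero x).hasDerivAt
  have hdφ : ∀ x, HasDerivAt φ (deriv φ x) x :=
    fun x => (hφ1.differentiable one_ne_zero x).hasDerivAt
  have hdφ' : ∀ x, HasDerivAt (deriv φ) (deriv (deriv φ) x) x :=
    fun x => (hφ'1.differentiable one_ne_zero x).hasDerivAt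
  -- the compact-support transfer helper
  have hsupp : ∀ h : ℝ → ℝ, (∀ x, f x = 0 → deriv f x = 0 → h x = 0) →
      HasCompactSupport h := by
    intro h hh
    apply hfc.mono'
    intro x hx
    by_contra hxt
    exact hx (hh x (image_eq_zero_of_notMem_tsupport hxt)
      (notMem_support.mp fun hx' => hxt (support_deriv_subset hx')))
  -- the auxiliary function for integration by parts
  set g : ℝ → ℝ := fun l => (f l)^2 * φ l * deriv φ l with hgdef
  have hg1 : ContDiff ℝ 1 g := ((hf1.pow 2).mul hφ1).mul hφ'1
  have hgc : HasCompactSupport g := by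
    apply hsupp
    intro x hx _
    simp [hgdef, hx]
  have hgd : ∀ x, deriv g x = 2 * f x * deriv f x * φ x * deriv φ x
      + (f x)^2 * (deriv φ x)^2 + (f x)^2 * φ x * deriv (deriv φ) x := by
    intro x
    have h := (((hdf x).pow 2).mul (hdφ x)).mul (hdφ' x)
    have h2 : HasDerivAt g (2 * f x * deriv f x * φ x * deriv φ x
        + (f x)^2 * (deriv φ x)^2 + (f x)^2 * φ x * deriv (deriv φ) x) x := by
      refine h.congr_deriv ?_; simp only [Pi.pow_apply, Pi.mul_apply, show (2:ℕ) - 1 = 1 from rfl, pow_one, Nat.cast_ofNat]; ring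
    exact h2.deriv
  have hzero : (∫ x : ℝ, deriv g x) = 0 := integral_deriv_zero g hg1 hgc
  -- the four integrands
  set I1 : ℝ → ℝ := fun l => (1 - 2*ξ) * ((deriv φ l) * f l)^2 with hI1
  set I2 : ℝ → ℝ := fun l => (1/2) * (1 - 4*ξ) * m^2 * (φ l * f l)^2 with hI2
  set I3 : ℝ → ℝ := fun l => 2 * ξ * (deriv f l * φ l + f l * deriv φ l)^2 with hI3
  set I4 : ℝ → ℝ := fun l => 2 * ξ * ((φ l)^2 * (deriv f l)^2) with hI4
  have hint : ∀ h : ℝ → ℝ, Continuous h → (∀ x, f x = 0 → deriv f x = 0 → h x = 0) →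
      Integrable h := fun h hc hh => hc.integrable_of_hasCompactSupport (hsupp h hh)
  have hiI1 : Integrable I1 := hint I1 (by fun_prop) (fun x hx _ => by simp [hI1, hx])
  have hiI2 : Integrable I2 := hint I2 (by fun_prop) (fun x hx _ => by simp [hI2, hx])
  have hiI3 : Integrable I3 := hint I3 (by fun_prop)
    (fun x hx hx' => by simp [hI3, hx, hx'])
  have hiI4 : Integrable I4 := hint I4 (by fun_prop) (fun x _ hx' => by simp [hI4, hx'])
  have hidg : Integrable (deriv g) :=
    (hg1.continuous_deriv le_rfl).integrable_of_hasCompactSupport hgc.deriv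
  -- the key pointwise identity
  have hkey : ∀ l, T l * (f l)^2 = I1 l + I2 l + I3 l - I4 l - 2 * ξ * deriv g l := by
    intro l
    rw [hT l, hgd l]
    simp only [hI1, hI2, hI3, hI4]
    ring
  have hA : Integrable (fun l => I1 l + I2 l) := hiI1.add hiI2
  have hB : Integrable (fun l => I1 l + I2 l + I3 l) := hA.add hiI3
  have hC : Integrable (fun l => I1 l + I2 l + I3 l - I4 l) := hB.sub hiI4
  have hD : Integrable (fun l => 2 * ξ * deriv g l) := hidg.const_mul _
  have hTi : (∫ l : ℝ, T l * (f l)^2)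
      = (∫ l, I1 l) + (∫ l, I2 l) + (∫ l, I3 l) - (∫ l, I4 l) - 2 * ξ * ∫ l, deriv g l := by
    calc (∫ l : ℝ, T l * (f l)^2)
        = ∫ l : ℝ, (I1 l + I2 l + I3 l - I4 l - 2 * ξ * deriv g l) :=
          integral_congr_ae (Filter.Eventually.of_forall hkey)
      _ = _ := by
          rw [integral_sub hC hD, integral_sub hB hiI4, integral_add hA hiI3,
            integral_add hiI1 hiI2, integral_const_mul (2*ξ) (deriv g)]
  have h1ξ : (0:ℝ) ≤ 1 - 2*ξ := by linarith
  have hp1 : 0 ≤ ∫ l, I1 l := integral_nonneg fun l => by positivity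
  have hp2 : 0 ≤ ∫ l, I2 l := integral_nonneg fun l => by
    have : (0:ℝ) ≤ 1 - 4*ξ := by linarith
    positivity
  have hp3 : 0 ≤ ∫ l, I3 l := integral_nonneg fun l => by positivity
  have hI4eq : (∫ l, I4 l) = 2 * ξ * ∫ l : ℝ, (φ l)^2 * (deriv f l)^2 :=
    integral_const_mul (2*ξ) _
  rw [hTi, hzero, hI4eq]
  linarith
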